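/- If f : ℝⁿ → ℝᵐ satisfies the dot-product order preservation property, then the image of f is contained in the affine hyperplane {y ∈ ℝᵐ : ⟨f(0), y⟩ = ‖f(0)‖²}. -/
import Mathlib

open RealInnerProductSpace

theorem stmt_8 {n m : ℕ} (f : EuclideanSpace ℝ (Fin n) → EuclideanSpace ℝ (Fin m))
    (hord : ∀ x u v, ⟪x, u⟫ ≤ ⟪x, v⟫ → ⟪f x, f u⟫ ≤ ⟪f x, f v⟫) :
    Set.range f ⊆ {y | ⟪f 0, y⟫ = ‖f 0‖ ^ 2} := by
  rintro y ⟨x, rfl⟩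
  have h1 := hord 0 x 0 (by simp)
  have h2 := hord 0 0 x (by simp)
  have : ⟪f 0, f x⟫ = ⟪f 0, f 0⟫ := le_antisymm h1 h2
  rw [Set.mem_setOf_eq, this, real_inner_self_eq_norm_sq]
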